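/- Let R be a commutative ring such that every finitely presented cyclic R-module embeds in a finitely generated free R-module. Then for every finitely generated ideal I of R one has (0 : (0 : I)) = I (the double annihilator of I equals I). -/
import Mathlib


/-- If every finitely presented cyclic `R`-module embeds in a finitely generated free
`R`-module, then the double annihilator of every finitely generated ideal `I` equals `I`. -/
theorem stmt_0 {R : Type*} [CommRing R]
    (h : ∀ I : Ideal R, I.FG → ∃ (n : ℕ) (f : (R ⧸ I) →ₗ[R] (Fin n → R)),
      Function.Injective f) :
    ∀ I : Ideal R, I.FG →
      Submodule.annihilator (Submodule.annihilator I) = I := by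
  intro I hI
  apply le_antisymm
  · intro x hx
    obtain ⟨n, f, hf⟩ := h I hI
    have key : ∀ i, f 1 i ∈ Submodule.annihilator I := by
      intro i
      rw [Submodule.mem_annihilator]
      intro r hr
      have h1 : f ((Ideal.Quotient.mk I) r) = 0 := by
        rw [Ideal.Quotient.eq_zero_iff_mem.mpr hr, map_zero]
      have h2 : (Ideal.Quotient.mk I) r = r • (1 : R ⧸ I) := by
        simp [Algebra.smul_def]
      rw [h2, map_smul] at h1
      have := congrFun h1 i
      simpa [smul_eq_mul, mul_comm] using this
    have hx0 : f ((Ideal.Quotient.mk I) x) = 0 := by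
      have h2 : (Ideal.Quotient.mk I) x = x • (1 : R ⧸ I) := by
        simp [Algebra.smul_def]
      rw [h2, map_smul]
      funext i
      have := Submodule.mem_annihilator.mp hx _ (key i)
      simpa [smul_eq_mul] using this
    have : (Ideal.Quotient.mk I) x = 0 := by
      apply hf
      rw [hx0, map_zero]
    exact Ideal.Quotient.eq_zero_iff_mem.mp this
  · intro r hr
    rw [Submodule.mem_annihilator]
    intro a ha
    have := Submodule.mem_annihilator.mp ha _ hr
    simpa [smul_eq_mul, mul_comm] using this
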